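/- Let N ≥ 2 be an integer and q = exp(πi/N). For every integer s with 1 ≤ s ≤ N−1, ∑_{l=1}^{N−s−1} 1/([l]·[N−s−l]) = −[s]⁻¹ · ∑_{l=s+1}^{N−1} {l}_+/[l]. -/

import Mathlib

open Complex Finset

/-- `q = exp(π i / N)`. -/
noncomputable def qq (N : ℕ) : ℂ := Complex.exp (Real.pi * Complex.I / N)

/-- The quantum integer `[k] = (q^k - q^{-k}) / (q - q^{-1})`. -/
noncomputable def qint (N : ℕ) (k : ℤ) : ℂ :=
  (qq N ^ k - qq N ^ (-k)) / (qq N - (qq N)⁻¹)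


lemma qq_ne (N : ℕ) : qq N ≠ 0 := Complex.exp_ne_zero _

lemma qq_pow_N (N : ℕ) (hN : N ≠ 0) : qq N ^ (N : ℤ) = -1 := by
  have hN' : (N:ℂ) ≠ 0 := Nat.cast_ne_zero.2 hN
  rw [qq, ← Complex.exp_int_mul,
    show ((N:ℤ):ℂ) * (Real.pi * Complex.I / N) = Real.pi * Complex.I by
      push_cast; field_simp]
  exact Complex.exp_pi_mul_I

lemma brace_ne (N : ℕ) (k : ℤ) (h1 : 1 ≤ k) (h2 : k ≤ (N:ℤ) - 1) :
    qq N ^ k - qq N ^ (-k) ≠ 0 := by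
  intro h
  have hq := qq_ne N
  have hk : qq N ^ k = qq N ^ (-k) := sub_eq_zero.1 h
  have h2k : qq N ^ (2*k) = 1 := by
    rw [two_mul, zpow_add₀ hq]
    nth_rw 1 [hk]
    rw [← zpow_add₀ hq, neg_add_cancel, zpow_zero]
  rw [qq, ← Complex.exp_int_mul, Complex.exp_eq_one_iff] at h2k
  obtain ⟨m, hm⟩ := h2k
  have hN' : (N:ℂ) ≠ 0 := by
    have : (1:ℤ) ≤ (N:ℤ) - 1 := le_trans h1 h2
    have : N ≠ 0 := by omega
    exact Nat.cast_ne_zero.2 this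
  have hπ : (Real.pi:ℂ) ≠ 0 := by
    exact_mod_cast Real.pi_ne_zero
  have hI : Complex.I ≠ 0 := Complex.I_ne_zero
  have hc : (k : ℂ) = m * N := by
    push_cast at hm
    field_simp at hm
    have hc2 : (k:ℂ) * (2*Real.pi*Complex.I) = (↑m*↑N) * (2*Real.pi*Complex.I) := by
      linear_combination (2*(Real.pi:ℂ)*Complex.I) * hm
    have hne : (2*(Real.pi:ℂ)*Complex.I) ≠ 0 := by
      simp [hπ, hI]
    exact mul_right_cancel₀ hne hc2
  have hkz : k = m * N := by exact_mod_cast hc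
  rcases le_or_gt m 0 with h | h
  · have hNN : (1:ℤ) ≤ (N:ℤ) := by omega
    nlinarith
  · have : 1 ≤ m := h
    nlinarith

lemma qq_refl (N : ℕ) (hN : N ≠ 0) (k : ℤ) :
    qq N ^ ((N:ℤ) - k) = -(qq N ^ (-k)) := by
  rw [zpow_sub₀ (qq_ne N), qq_pow_N N hN, zpow_neg, neg_div, one_div]

lemma qq_refl' (N : ℕ) (hN : N ≠ 0) (k : ℤ) :
    qq N ^ (-((N:ℤ) - k)) = -(qq N ^ k) := by
  rw [neg_sub, zpow_sub₀ (qq_ne N), qq_pow_N N hN, div_neg, div_one]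

lemma qint_refl (N : ℕ) (hN : N ≠ 0) (k : ℤ) :
    qint N ((N:ℤ) - k) = qint N k := by
  unfold qint
  rw [qq_refl N hN k, qq_refl' N hN k]
  ring_nf

noncomputable def ff (N : ℕ) (l : ℤ) : ℂ := (qq N ^ l + qq N ^ (-l)) / qint N l

lemma ff_refl (N : ℕ) (hN : N ≠ 0) (k : ℤ) : ff N ((N:ℤ) - k) = -(ff N k) := by
  unfold ff
  rw [qq_refl N hN k, qq_refl' N hN k, qint_refl N hN k, ← neg_add, neg_div,
    add_comm]

lemma key_alg (a b e : ℂ) (ha : a ≠ 0) (hb : b ≠ 0) (h1 : a - a⁻¹ ≠ 0)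
    (h2 : b*a - (b*a)⁻¹ ≠ 0) (h3 : b - b⁻¹ ≠ 0) (he : e ≠ 0) :
    1 / (((a - a⁻¹)/e) * ((b*a - (b*a)⁻¹)/e)) =
      ((b - b⁻¹)/e)⁻¹ * (((a + a⁻¹)/((a - a⁻¹)/e)
        - (b*a + (b*a)⁻¹)/((b*a - (b*a)⁻¹)/e))/2) := by
  have hba : b * a ≠ 0 := mul_ne_zero hb ha
  have e1 : a - a⁻¹ = (a^2 - 1)/a := by field_simp
  have e2 : b*a - (b*a)⁻¹ = ((b*a)^2 - 1)/(b*a) := by field_simp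
  have e3 : b - b⁻¹ = (b^2 - 1)/b := by field_simp
  have e4 : a + a⁻¹ = (a^2 + 1)/a := by field_simp
  have e5 : b*a + (b*a)⁻¹ = ((b*a)^2 + 1)/(b*a) := by field_simp
  have h1' : a^2 - 1 ≠ 0 := by rw [e1] at h1; exact fun h => h1 (by rw [h, zero_div])
  have h2' : (b*a)^2 - 1 ≠ 0 := by rw [e2] at h2; exact fun h => h2 (by rw [h, zero_div])
  have h3' : b^2 - 1 ≠ 0 := by rw [e3] at h3; exact fun h => h3 (by rw [h, zero_div])
  have e6 : ((b - b⁻¹)/e)⁻¹ = e * b / (b^2 - 1) := by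
    rw [e3, div_div, inv_div]; ring
  have e7 : (a + a⁻¹)/((a - a⁻¹)/e) = e*(a^2+1)/(a^2-1) := by
    rw [e4, e1]; field_simp
  have e8 : (b*a + (b*a)⁻¹)/((b*a - (b*a)⁻¹)/e) = e*((b*a)^2+1)/((b*a)^2-1) := by
    rw [e5, e2]; field_simp
  have e9 : ((a - a⁻¹)/e) * ((b*a - (b*a)⁻¹)/e)
      = (a^2-1)*((b*a)^2-1)/(e^2 * a * (b*a)) := by
    rw [e1, e2]; field_simp
  rw [e6, e7, e8, e9]
  have h2'' : a^2*b^2 - 1 ≠ 0 := by rw [← mul_pow, mul_comm]; exact h2'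
  field_simp
  ring

theorem stmt2 (N : ℕ) (hN : 2 ≤ N) (s : ℤ) (hs1 : 1 ≤ s) (hs : s ≤ (N : ℤ) - 1) :
    ∑ l ∈ Finset.Icc 1 ((N : ℤ) - s - 1), 1 / (qint N l * qint N ((N : ℤ) - s - l)) =
      -(qint N s)⁻¹ * ∑ l ∈ Finset.Icc (s + 1) ((N : ℤ) - 1),
        (qq N ^ l + qq N ^ (-l)) / qint N l := by
  have hq := qq_ne N
  have hN0 : N ≠ 0 := by omega
  have hNZ : (2:ℤ) ≤ (N:ℤ) := by exact_mod_cast hN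
  -- Step A: reflection
  have hA : ∑ l ∈ Finset.Icc (1:ℤ) ((N:ℤ) - s - 1), ff N l
      = -∑ l ∈ Finset.Icc (s+1) ((N:ℤ)-1), ff N l := by
    rw [← Finset.sum_neg_distrib]
    apply Finset.sum_nbij' (i := fun l => (N:ℤ) - l) (j := fun l => (N:ℤ) - l)
    · intro a ha; simp only [Finset.mem_Icc] at *; omega
    · intro a ha; simp only [Finset.mem_Icc] at *; omega
    · intro a _; omega
    · intro a _; omega
    · intro a ha
      rw [show ff N a = ff N ((N:ℤ) - ((N:ℤ) - a)) by norm_num, ff_refl N hN0]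
  -- Step B: shift
  have hB : ∑ l ∈ Finset.Icc (1:ℤ) ((N:ℤ) - s - 1), ff N (s + l)
      = ∑ l ∈ Finset.Icc (s+1) ((N:ℤ)-1), ff N l := by
    apply Finset.sum_nbij' (i := fun l => s + l) (j := fun l => l - s)
    · intro a ha; simp only [Finset.mem_Icc] at *; omega
    · intro a ha; simp only [Finset.mem_Icc] at *; omega
    · intro a _; omega
    · intro a _; omega
    · intro a _; rfl
  -- termwise
  have hterm : ∀ l ∈ Finset.Icc (1:ℤ) ((N:ℤ) - s - 1),
      1 / (qint N l * qint N ((N:ℤ) - s - l))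
        = (qint N s)⁻¹ * ((ff N l - ff N (s + l))/2) := by
    intro l hl
    rw [Finset.mem_Icc] at hl
    have h1 : qint N ((N:ℤ)-s-l) = qint N (s+l) := by
      rw [show (N:ℤ)-s-l = (N:ℤ)-(s+l) by ring, qint_refl N hN0]
    have ha : qq N ^ l ≠ 0 := zpow_ne_zero _ hq
    have hb : qq N ^ s ≠ 0 := zpow_ne_zero _ hq
    have hbl : qq N ^ l - qq N ^ (-l) ≠ 0 := brace_ne N l hl.1 (by omega)
    have hbs : qq N ^ s - qq N ^ (-s) ≠ 0 := brace_ne N s hs1 hs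
    have hbsl : qq N ^ (s+l) - qq N ^ (-(s+l)) ≠ 0 := brace_ne N (s+l) (by omega) (by omega)
    have he : qq N - (qq N)⁻¹ ≠ 0 := by
      have := brace_ne N 1 le_rfl (by omega)
      simpa using this
    rw [h1]
    unfold ff qint
    rw [zpow_neg (qq N) l, zpow_neg (qq N) s, zpow_neg (qq N) (s+l),
      zpow_add₀ hq s l]
    exact key_alg (qq N ^ l) (qq N ^ s) (qq N - (qq N)⁻¹) ha hb
      (by rw [← zpow_neg (qq N) l]; exact hbl)
      (by rw [← zpow_add₀ hq s l, ← zpow_neg (qq N) (s+l)]; exact hbsl)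
      (by rw [← zpow_neg (qq N) s]; exact hbs) he
  calc ∑ l ∈ Finset.Icc 1 ((N : ℤ) - s - 1), 1 / (qint N l * qint N ((N : ℤ) - s - l))
      = ∑ l ∈ Finset.Icc (1:ℤ) ((N:ℤ) - s - 1),
          (qint N s)⁻¹ * ((ff N l - ff N (s + l))/2) := Finset.sum_congr rfl hterm
    _ = (qint N s)⁻¹ * ((∑ l ∈ Finset.Icc (1:ℤ) ((N:ℤ) - s - 1), ff N l
          - ∑ l ∈ Finset.Icc (1:ℤ) ((N:ℤ) - s - 1), ff N (s + l))/2) := by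
        rw [← Finset.mul_sum, ← Finset.sum_div, Finset.sum_sub_distrib]
    _ = -(qint N s)⁻¹ * ∑ l ∈ Finset.Icc (s + 1) ((N : ℤ) - 1), ff N l := by
        rw [hA, hB]; ring
    _ = -(qint N s)⁻¹ * ∑ l ∈ Finset.Icc (s + 1) ((N : ℤ) - 1),
          (qq N ^ l + qq N ^ (-l)) / qint N l := rfl
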